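/- Let F be an algebraically closed field of characteristic p > 0, q = p^ℓ with ℓ ≥ 1, θ ∈ F, and n ≥ 1. Then for every polynomial f ∈ F[t] there exists a unique polynomial R ∈ F[t] with degree R < n such that f − R = (φ(B) − B)·(t − θ)^n for some B ∈ F[t]. (This is the content of the identifications Ext¹_ℱ(M_{C^{⊗n}}, M_{C^{⊗n}}) ≅ F[t]/{B^{(−1)}(t−θ)^n − (t−θ)^n B : B ∈ F[t]} ≅ F^n: every class modulo the subgroup {(φ(B)−B)(t−θ)^n} contains exactly one polynomial of degree < n.) -/

import Mathlib

open Polynomial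

/-- Let `F` be an algebraically closed field of characteristic `p > 0`,
`q = p^ℓ`, `θ ∈ F` and `n ≥ 1`. For every polynomial `f ∈ F[t]` there is a unique
polynomial `R` of degree `< n` such that `f - R = (φ(B) - B)·(t - θ)^n` for some `B`,
where `φ` applies the inverse of the `q`-power automorphism to each coefficient.
(Ext¹(M_{C^{⊗n}}, M_{C^{⊗n}}) ≅ F[t]/{B^{(-1)}(t-θ)^n - (t-θ)^n B} ≅ F^n.) -/
theorem ext_class_unique_small_representative
    (F : Type*) [Field F] [IsAlgClosed F] (p ℓ q : ℕ) [Fact p.Prime] [CharP F p]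
    (hℓ : 1 ≤ ℓ) (hq : q = p ^ ℓ) (θ : F) (n : ℕ) (hn : 1 ≤ n) (f : Polynomial F) :
    ∃! R : Polynomial F, R.degree < (n : WithBot ℕ) ∧ ∃ B : Polynomial F,
      f - R = (Polynomial.map ((iterateFrobeniusEquiv F p ℓ).symm : F →+* F) B - B) *
        (Polynomial.X - Polynomial.C θ) ^ n := by
  set σ : F →+* F := ((iterateFrobeniusEquiv F p ℓ).symm : F →+* F) with hσ
  have hq2 : 2 ≤ p ^ ℓ :=
    le_trans (Fact.out : p.Prime).two_le (Nat.le_self_pow (by omega) p)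
  -- coefficientwise surjectivity of x ↦ σ x - x
  have hfield : ∀ c : F, ∃ x : F, σ x - x = c := by
    intro c
    set a := iterateFrobeniusEquiv F p ℓ c with ha
    have hdp : ((X : Polynomial F) ^ (p ^ ℓ) - X + C a).degree = ((p ^ ℓ : ℕ) : WithBot ℕ) := by
      rw [sub_eq_add_neg, add_assoc, degree_add_eq_left_of_degree_lt, degree_X_pow]
      rw [degree_X_pow]
      refine lt_of_le_of_lt (degree_add_le _ _) (max_lt ?_ ?_)
      · rw [degree_neg, degree_X]
        exact_mod_cast (by omega : 1 < p ^ ℓ)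
      · exact lt_of_le_of_lt degree_C_le (by exact_mod_cast (by omega : 0 < p ^ ℓ))
    have hdeg : ((X : Polynomial F) ^ (p ^ ℓ) - X + C a).degree ≠ 0 := by
      rw [hdp]
      exact_mod_cast (by omega : ¬ (p ^ ℓ = 0))
    obtain ⟨y, hy⟩ := IsAlgClosed.exists_root _ hdeg
    rw [IsRoot, eval_add, eval_sub, eval_pow, eval_X, eval_C] at hy
    refine ⟨y, ?_⟩
    have h3 : iterateFrobeniusEquiv F p ℓ y = y - a := by
      rw [iterateFrobeniusEquiv_apply, iterateFrobenius_def]; linear_combination hy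
    have h4 := congrArg (iterateFrobeniusEquiv F p ℓ).symm h3
    rw [RingEquiv.symm_apply_apply, map_sub, ha, RingEquiv.symm_apply_apply] at h4
    have hgoal : σ y = (iterateFrobeniusEquiv F p ℓ).symm y := rfl
    rw [hgoal]
    linear_combination -h4
  -- polynomial surjectivity of B ↦ map σ B - B
  have hpoly : ∀ h : Polynomial F, ∃ B : Polynomial F, Polynomial.map σ B - B = h := by
    intro h
    induction h using Polynomial.induction_on' with
    | add a b ha hb =>
      obtain ⟨B1, h1⟩ := ha
      obtain ⟨B2, h2⟩ := hb
      exact ⟨B1 + B2, by rw [Polynomial.map_add, ← h1, ← h2]; ring⟩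
    | monomial m c =>
      obtain ⟨x, hx⟩ := hfield c
      refine ⟨monomial m x, ?_⟩
      rw [map_monomial, ← hx, ← map_sub (monomial m)]
  set g : Polynomial F := (X - C θ) ^ n with hg
  have hgm : g.Monic := (monic_X_sub_C θ).pow n
  have hdeg : g.degree = (n : WithBot ℕ) := by
    rw [hg, degree_pow, degree_X_sub_C, nsmul_eq_mul, mul_one]
  refine ⟨f %ₘ g, ⟨?_, ?_⟩, ?_⟩
  · rw [← hdeg]; exact degree_modByMonic_lt f hgm
  · obtain ⟨B, hB⟩ := hpoly (f /ₘ g)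
    refine ⟨B, ?_⟩
    rw [hB]
    have h5 := modByMonic_add_div f g
    linear_combination -h5
  · rintro R ⟨hRdeg, B, hB⟩
    have hdvd : g ∣ f - R := ⟨Polynomial.map σ B - B, by rw [hB, hg]; ring⟩
    have h0 : (f - R) %ₘ g = 0 := (modByMonic_eq_zero_iff_dvd hgm).2 hdvd
    rw [sub_modByMonic] at h0
    have hR : R %ₘ g = R := modByMonic_eq_self_iff hgm |>.2 (by rw [hdeg]; exact hRdeg)
    rw [hR] at h0
    exact (sub_eq_zero.mp h0).symm
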